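/- arXiv:1212.6518 — 2 statements merged into one kernel-verified Lean document; each statement's English description precedes it below -/
import Mathlib

section
/- Let F : ℝ² → ℝ² be the polynomial mapping F(x,y) = (x, x²y(y+2)). Then the asymptotic set of F is S_F = {(α,β) ∈ ℝ² : α = 0 and β ≥ 0}, i.e. the closed half-line {0} × [0,∞). -/
open Filter Topology

/-- The asymptotic set (Jelonek set) of a map `F : ℝ² → ℝ²`: the set of points
`y` such that some sequence `x_k` with `‖x_k‖ → ∞` satisfies `F (x_k) → y`. -/
def asymptoticSet (F : ℝ × ℝ → ℝ × ℝ) : Set (ℝ × ℝ) :=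
  {y | ∃ x : ℕ → ℝ × ℝ,
    Tendsto (fun k => ‖x k‖) atTop atTop ∧ Tendsto (fun k => F (x k)) atTop (nhds y)}

/-- For `F(x,y) = (x, x²y(y+2))`, the asymptotic set is the closed half-line
`{0} × [0, ∞)`. -/
theorem asymptoticSet_example
    (F : ℝ × ℝ → ℝ × ℝ) (hF : ∀ p : ℝ × ℝ, F p = (p.1, p.1 ^ 2 * p.2 * (p.2 + 2))) :
    asymptoticSet F = {q : ℝ × ℝ | q.1 = 0 ∧ 0 ≤ q.2} := by
  ext q
  obtain ⟨α, β⟩ := q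
  simp only [asymptoticSet, Set.mem_setOf_eq]
  constructor
  · rintro ⟨x, hnorm, hconv⟩
    set a : ℕ → ℝ := fun k => (x k).1 with ha
    set b : ℕ → ℝ := fun k => (x k).2 with hb
    have h1 : Tendsto a atTop (nhds α) := by
      have := (continuous_fst.tendsto ((α, β) : ℝ × ℝ)).comp hconv
      simpa [hF, Function.comp_def] using this
    have h2 : Tendsto (fun k => a k ^ 2 * b k * (b k + 2)) atTop (nhds β) := by
      have := (continuous_snd.tendsto ((α, β) : ℝ × ℝ)).comp hconv
      simpa [hF, Function.comp_def] using this
    -- |b| → ∞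
    have hbabs : Tendsto (fun k => |b k|) atTop atTop := by
      have haev : ∀ᶠ k in atTop, |a k| ≤ |α| + 1 := by
        have := h1.abs.eventually (eventually_le_nhds (by linarith : |α| < |α| + 1))
        exact this
      have hmax : Tendsto (fun k => max (|α| + 1) (|b k|)) atTop atTop := by
        apply tendsto_atTop_mono' _ _ hnorm
        filter_upwards [haev] with k hk
        rw [Prod.norm_def]
        simp only [Real.norm_eq_abs]
        exact max_le_max hk le_rfl
      have key : ∀ k, max (|α| + 1) (|b k|) - (|α| + 1) ≤ |b k| := by
        intro k
        have : max (|α| + 1) (|b k|) ≤ (|α| + 1) + |b k| :=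
          max_le (by linarith [abs_nonneg (b k)]) (by linarith [abs_nonneg α])
        linarith
      exact tendsto_atTop_mono key
        (tendsto_atTop_add_const_right _ (-(|α| + 1)) hmax)
    -- b(b+2) → ∞
    have hbb : Tendsto (fun k => b k * (b k + 2)) atTop atTop := by
      have h3 : Tendsto (fun k => |b k + 1|) atTop atTop := by
        apply tendsto_atTop_mono (fun k => ?_)
          (tendsto_atTop_add_const_right _ (-1) hbabs)
        have := abs_add_le (b k + 1) (-1)
        simp only [add_neg_cancel_right] at this
        simpa using this
      have h4 : Tendsto (fun k => |b k + 1| ^ 2 - 1) atTop atTop :=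
        tendsto_atTop_add_const_right _ (-1)
          ((tendsto_pow_atTop two_ne_zero).comp h3)
      have heq : (fun k => |b k + 1| ^ 2 - 1) = fun k => b k * (b k + 2) := by
        funext k; rw [sq_abs]; ring
      rwa [heq] at h4
    -- α = 0
    have hα : α = 0 := by
      by_contra hne
      have hpos : (0 : ℝ) < α ^ 2 := by positivity
      have ha2 : Tendsto (fun k => a k ^ 2) atTop (nhds (α ^ 2)) := h1.pow 2
      have : Tendsto (fun k => a k ^ 2 * (b k * (b k + 2))) atTop atTop :=
        ha2.pos_mul_atTop hpos hbb
      have h2' : Tendsto (fun k => a k ^ 2 * (b k * (b k + 2))) atTop (nhds β) := by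
        have heq : (fun k => a k ^ 2 * (b k * (b k + 2)))
            = fun k => a k ^ 2 * b k * (b k + 2) := by funext k; ring
        rwa [heq]
      exact not_tendsto_atTop_of_tendsto_nhds h2' this
    refine ⟨hα, ?_⟩
    -- β ≥ 0
    have ha0 : Tendsto (fun k => -(a k ^ 2)) atTop (nhds 0) := by
      have := (h1.pow 2).neg
      rw [hα] at this
      simpa using this
    have hle : ∀ k, -(a k ^ 2) ≤ a k ^ 2 * b k * (b k + 2) := by
      intro k
      have : a k ^ 2 * b k * (b k + 2) + a k ^ 2 = a k ^ 2 * (b k + 1) ^ 2 := by ring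
      nlinarith [sq_nonneg (a k * (b k + 1))]
    exact le_of_tendsto_of_tendsto' ha0 h2 hle
  · rintro ⟨hα, hβ⟩
    subst hα
    refine ⟨fun k => (Real.sqrt (β / (((k : ℝ) + 1) * ((k : ℝ) + 3))), (k : ℝ) + 1), ?_, ?_⟩
    · have hmon : Tendsto (fun k : ℕ => (k : ℝ) + 1) atTop atTop :=
        tendsto_atTop_add_const_right _ 1 tendsto_natCast_atTop_atTop
      refine tendsto_atTop_mono (fun k => ?_) hmon
      rw [Prod.norm_def]
      simp only [Real.norm_eq_abs]
      calc (k : ℝ) + 1 ≤ |(k : ℝ) + 1| := le_abs_self _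
        _ ≤ _ := le_max_right _ _
    · have hpos : ∀ k : ℕ, (0 : ℝ) < ((k : ℝ) + 1) * ((k : ℝ) + 3) := by
        intro k; positivity
      have heq : (fun k : ℕ => F (Real.sqrt (β / (((k : ℝ) + 1) * ((k : ℝ) + 3))), (k : ℝ) + 1))
          = fun k : ℕ => (Real.sqrt (β / (((k : ℝ) + 1) * ((k : ℝ) + 3))), β) := by
        funext k
        rw [hF]
        simp only [Prod.mk.injEq]
        refine ⟨trivial, ?_⟩
        rw [Real.sq_sqrt (div_nonneg hβ (hpos k).le)]
        calc β / (((k : ℝ) + 1) * ((k : ℝ) + 3)) * ((k : ℝ) + 1) * (((k : ℝ) + 1) + 2)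
            = β / (((k : ℝ) + 1) * ((k : ℝ) + 3)) * (((k : ℝ) + 1) * ((k : ℝ) + 3)) := by
              ring
          _ = β := div_mul_cancel₀ β (hpos k).ne'
      rw [heq]
      have hsq : Tendsto (fun k : ℕ => Real.sqrt (β / (((k : ℝ) + 1) * ((k : ℝ) + 3))))
          atTop (nhds 0) := by
        have hd : Tendsto (fun k : ℕ => ((k : ℝ) + 1) * ((k : ℝ) + 3)) atTop atTop := by
          exact Tendsto.atTop_mul_atTop₀
            (tendsto_atTop_add_const_right _ 1 tendsto_natCast_atTop_atTop)
            (tendsto_atTop_add_const_right _ 3 tendsto_natCast_atTop_atTop)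
        have h0 : Tendsto (fun k : ℕ => β / (((k : ℝ) + 1) * ((k : ℝ) + 3)))
            atTop (nhds 0) := tendsto_const_nhds.div_atTop hd
        have := (Real.continuous_sqrt.tendsto 0).comp h0
        simpa [Function.comp_def] using this
      exact hsq.prodMk_nhds tendsto_const_nhds
end

section
/- Let F : ℝ² → ℝ² be the polynomial mapping F(x,y) = (x, x²y(y+2)). Then the image under F of the open region U_3 = {(x,y) ∈ ℝ² : x < 0, y > -1} and the image under F of the open region U_4 = {(x,y) ∈ ℝ² : x < 0, y < -1} are equal, and both equal {(α,β) ∈ ℝ² : α < 0 and β > -α²}. -/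
/-- For `F(x,y) = (x, x²y(y+2))`, the images of the regions
`U₃ = {x < 0, y > -1}` and `U₄ = {x < 0, y < -1}` coincide and equal
`{(α,β) : α < 0, β > -α²}`. -/
theorem image_regions_example_left
    (F : ℝ × ℝ → ℝ × ℝ) (hF : ∀ p : ℝ × ℝ, F p = (p.1, p.1 ^ 2 * p.2 * (p.2 + 2))) :
    F '' {p : ℝ × ℝ | p.1 < 0 ∧ -1 < p.2} = {q : ℝ × ℝ | q.1 < 0 ∧ -q.1 ^ 2 < q.2} ∧
    F '' {p : ℝ × ℝ | p.1 < 0 ∧ p.2 < -1} = {q : ℝ × ℝ | q.1 < 0 ∧ -q.1 ^ 2 < q.2} := by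
  constructor
  · ext ⟨α, β⟩
    simp only [Set.mem_image, Set.mem_setOf_eq, hF, Prod.mk.injEq]
    constructor
    · rintro ⟨⟨x, y⟩, ⟨hx, hy⟩, h1, h2⟩
      subst h1; subst h2
      refine ⟨hx, ?_⟩
      have h2 : 0 < x ^ 2 * (y + 1) ^ 2 :=
        mul_pos (pow_two_pos_of_ne_zero hx.ne) (pow_two_pos_of_ne_zero (by intro h; nlinarith : y + 1 ≠ 0))
      nlinarith
    · rintro ⟨hα, hβ⟩
      have hα2 : 0 < α ^ 2 := pow_two_pos_of_ne_zero hα.ne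
      have ht : 0 < β / α ^ 2 + 1 := by
        have : β / α ^ 2 + 1 = (β + α ^ 2) / α ^ 2 := by field_simp [hα.ne]
        rw [this]
        have : 0 < β + α ^ 2 := by linarith
        positivity
      set s := Real.sqrt (β / α ^ 2 + 1) with hsdef
      have hs : 0 < s := Real.sqrt_pos.2 ht
      have hs2 : s ^ 2 = β / α ^ 2 + 1 := Real.sq_sqrt ht.le
      refine ⟨(α, -1 + s), ⟨hα, show (-1:ℝ) < -1 + s by linarith⟩, rfl, ?_⟩
      have : α ^ 2 * (-1 + s) * (-1 + s + 2) = α ^ 2 * (s ^ 2 - 1) := by ring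
      rw [this, hs2]
      field_simp [hα.ne]
      ring
  · ext ⟨α, β⟩
    simp only [Set.mem_image, Set.mem_setOf_eq, hF, Prod.mk.injEq]
    constructor
    · rintro ⟨⟨x, y⟩, ⟨hx, hy⟩, h1, h2⟩
      subst h1; subst h2
      refine ⟨hx, ?_⟩
      have h2 : 0 < x ^ 2 * (y + 1) ^ 2 :=
        mul_pos (pow_two_pos_of_ne_zero hx.ne) (pow_two_pos_of_ne_zero (by intro h; nlinarith : y + 1 ≠ 0))
      nlinarith
    · rintro ⟨hα, hβ⟩
      have hα2 : 0 < α ^ 2 := pow_two_pos_of_ne_zero hα.ne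
      have ht : 0 < β / α ^ 2 + 1 := by
        have : β / α ^ 2 + 1 = (β + α ^ 2) / α ^ 2 := by field_simp [hα.ne]
        rw [this]
        have : 0 < β + α ^ 2 := by linarith
        positivity
      set s := Real.sqrt (β / α ^ 2 + 1) with hsdef
      have hs : 0 < s := Real.sqrt_pos.2 ht
      have hs2 : s ^ 2 = β / α ^ 2 + 1 := Real.sq_sqrt ht.le
      refine ⟨(α, -1 - s), ⟨hα, show (-1:ℝ) - s < -1 by linarith⟩, rfl, ?_⟩
      have : α ^ 2 * (-1 - s) * (-1 - s + 2) = α ^ 2 * (s ^ 2 - 1) := by ring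
      rw [this, hs2]
      field_simp [hα.ne]
      ring
end
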